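/- Let F : X → ℝ be differentiable on X = ∏ᵢ Xᵢ with each Xᵢ a compact interval in ℝ₊, and suppose the gradient of F is antitone: x ⪯ y implies ∇F(x) ⪰ ∇F(y) componentwise. Then F is continuous submodular: for all x, y ∈ X, F(x ∨ y) + F(x ∧ y) ≤ F(x) + F(y), where ∨ and ∧ denote componentwise max and min. -/

import Mathlib

open Set

theorem stmt2 {n : ℕ} (a b : Fin n → ℝ)
    (ha : ∀ i, 0 ≤ a i) (hab : ∀ i, a i ≤ b i)
    (F : EuclideanSpace ℝ (Fin n) → ℝ)
    (X : Set (EuclideanSpace ℝ (Fin n)))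
    (hX : X = {x : EuclideanSpace ℝ (Fin n) | ∀ i, x i ∈ Set.Icc (a i) (b i)})
    (hdiff : ∀ x ∈ X, DifferentiableAt ℝ F x)
    (hanti : ∀ x ∈ X, ∀ y ∈ X, (∀ i, x i ≤ y i) →
      ∀ i, gradient F y i ≤ gradient F x i) :
    ∀ x ∈ X, ∀ y ∈ X,
      F ((WithLp.equiv 2 (Fin n → ℝ)).symm (fun i => max (x i) (y i))) +
      F ((WithLp.equiv 2 (Fin n → ℝ)).symm (fun i => min (x i) (y i))) ≤
      F x + F y := by
  intro x hx y hy
  subst hX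
  set m : EuclideanSpace ℝ (Fin n) :=
    (WithLp.equiv 2 (Fin n → ℝ)).symm (fun i => min (x i) (y i)) with hm
  set M : EuclideanSpace ℝ (Fin n) :=
    (WithLp.equiv 2 (Fin n → ℝ)).symm (fun i => max (x i) (y i)) with hM
  set d : EuclideanSpace ℝ (Fin n) :=
    (WithLp.equiv 2 (Fin n → ℝ)).symm (fun i => x i - min (x i) (y i)) with hd
  have hdnn : ∀ i, 0 ≤ d i := fun i => by
    simp [hd, WithLp.equiv_symm_apply, PiLp.toLp_apply, min_le_left]
  have hMyd : M = y + d := by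
    apply PiLp.ext
    intro i
    simp only [hM, hd, WithLp.equiv_symm_apply, PiLp.toLp_apply, PiLp.add_apply]
    rcases le_total (x i) (y i) with h | h <;>
      simp [max_eq_right, max_eq_left, min_eq_left, min_eq_right, h] <;> ring
  have hxmd : x = m + d := by
    apply PiLp.ext
    intro i
    simp only [hm, hd, WithLp.equiv_symm_apply, PiLp.toLp_apply, PiLp.add_apply]
    ring
  -- membership of the two segments
  have hmemY : ∀ t ∈ Icc (0:ℝ) 1, (y + t • d) ∈
      {x : EuclideanSpace ℝ (Fin n) | ∀ i, x i ∈ Set.Icc (a i) (b i)} := by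
    intro t ht i
    have h1 := (hy i).1
    have h2 : max (x i) (y i) ≤ b i := max_le (hx i).2 (hy i).2
    have hdi : 0 ≤ d i := hdnn i
    have hyd : y i + d i = max (x i) (y i) := by
      have := congrArg (fun v => v i) hMyd
      simpa [hM, WithLp.equiv_symm_apply, PiLp.toLp_apply, PiLp.add_apply] using this.symm
    constructor
    · have : 0 ≤ t * d i := mul_nonneg ht.1 hdi
      simp only [PiLp.add_apply, PiLp.smul_apply, smul_eq_mul]
      linarith
    · have : t * d i ≤ d i := by nlinarith [ht.2]
      simp only [PiLp.add_apply, PiLp.smul_apply, smul_eq_mul]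
      linarith
  have hmemM : ∀ t ∈ Icc (0:ℝ) 1, (m + t • d) ∈
      {x : EuclideanSpace ℝ (Fin n) | ∀ i, x i ∈ Set.Icc (a i) (b i)} := by
    intro t ht i
    have h1 : a i ≤ min (x i) (y i) := le_min (hx i).1 (hy i).1
    have hdi : 0 ≤ d i := hdnn i
    have hxd : m i + d i = x i := by
      have := congrArg (fun v => v i) hxmd
      simpa [PiLp.add_apply] using this.symm
    constructor
    · have : 0 ≤ t * d i := mul_nonneg ht.1 hdi
      simp only [PiLp.add_apply, PiLp.smul_apply, smul_eq_mul]
      simp only [hm, WithLp.equiv_symm_apply, PiLp.toLp_apply]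
      linarith
    · have h2 : t * d i ≤ d i := by nlinarith [ht.2]
      have h3 : x i ≤ b i := (hx i).2
      simp only [PiLp.add_apply, PiLp.smul_apply, smul_eq_mul]
      have := hxd
      simp only [hm, WithLp.equiv_symm_apply, PiLp.toLp_apply] at this ⊢
      linarith
  -- the auxiliary function
  set φ : ℝ → ℝ := fun t => F (y + t • d) - F (m + t • d) with hφ
  have hline : ∀ (p : EuclideanSpace ℝ (Fin n)) (t : ℝ),
      HasDerivAt (fun s : ℝ => p + s • d) d t := by
    intro p t
    have : HasDerivAt (fun s : ℝ => s • d) ((1:ℝ) • d) t :=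
      (hasDerivAt_id t).smul_const d
    simpa using this.const_add p
  have hderivφ : ∀ t ∈ Icc (0:ℝ) 1, HasDerivAt φ
      (inner ℝ (gradient F (y + t • d)) d - inner ℝ (gradient F (m + t • d)) d : ℝ) t := by
    intro t ht
    have h1 : HasDerivAt (fun s : ℝ => F (y + s • d))
        (inner ℝ (gradient F (y + t • d)) d) t := by
      have hg := (hdiff _ (hmemY t ht)).hasGradientAt.hasFDerivAt
      have := hg.comp_hasDerivAt t (hline y t)
      simpa [InnerProductSpace.toDual_apply_apply, Function.comp_def] using this
    have h2 : HasDerivAt (fun s : ℝ => F (m + s • d))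
        (inner ℝ (gradient F (m + t • d)) d) t := by
      have hg := (hdiff _ (hmemM t ht)).hasGradientAt.hasFDerivAt
      have := hg.comp_hasDerivAt t (hline m t)
      simpa [InnerProductSpace.toDual_apply_apply, Function.comp_def] using this
    exact h1.sub h2
  have hanti01 : AntitoneOn φ (Icc (0:ℝ) 1) := by
    apply antitoneOn_of_deriv_nonpos (convex_Icc 0 1)
    · intro t ht
      exact ((hderivφ t ht).differentiableAt).continuousAt.continuousWithinAt
    · intro t ht
      rw [interior_Icc] at ht
      exact ((hderivφ t (Ioo_subset_Icc_self ht)).differentiableAt).differentiableWithinAt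
    · intro t ht
      rw [interior_Icc] at ht
      rw [(hderivφ t (Ioo_subset_Icc_self ht)).deriv]
      have hle : ∀ i, (m + t • d) i ≤ (y + t • d) i := by
        intro i
        simp only [PiLp.add_apply, PiLp.smul_apply, smul_eq_mul, hm,
          WithLp.equiv_symm_apply, PiLp.toLp_apply]
        have := min_le_right (x i) (y i)
        linarith
      have hg := hanti _ (hmemM t (Ioo_subset_Icc_self ht)) _
        (hmemY t (Ioo_subset_Icc_self ht)) hle
      rw [sub_nonpos]
      simp only [PiLp.inner_apply, RCLike.inner_apply, conj_trivial]
      apply Finset.sum_le_sum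
      intro i _
      exact mul_le_mul_of_nonneg_left (hg i) (hdnn i)
  have key : φ 1 ≤ φ 0 :=
    hanti01 (by simp) (by constructor <;> norm_num) zero_le_one
  have e1 : y + (1:ℝ) • d = M := by rw [hMyd]; simp
  have e2 : m + (1:ℝ) • d = x := by rw [hxmd]; simp
  have e0y : y + (0:ℝ) • d = y := by simp
  have e0m : m + (0:ℝ) • d = m := by simp
  simp only [hφ, e1, e2, e0y, e0m] at key
  linarith
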